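/- Let W ~ N(0,1) be standard normal. For every s > 0 there exists u_0 > 0 (one may take u_0 = max{1, √s}) such that for all u_0 ≤ u_1 ≤ u_2, P(W > u_2)/P(W > u_1) ≤ 2·(u_1/u_2)^s. -/

import Mathlib

open ProbabilityTheory MeasureTheory Real Set Filter

noncomputable def gg (x : ℝ) : ℝ := rexp (-x^2/2)

lemma gg_pos (x : ℝ) : 0 < gg x := exp_pos _

lemma gg_tendsto : Tendsto gg atTop (nhds 0) := by
  have : Tendsto (fun x : ℝ => -x^2/2) atTop atBot := by
    apply Tendsto.atBot_div_const (by norm_num)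
    exact tendsto_neg_atTop_atBot.comp (tendsto_pow_atTop two_ne_zero)
  exact Real.tendsto_exp_atBot.comp this

lemma neg_gg_tendsto : Tendsto (fun x => -gg x) atTop (nhds 0) := by
  simpa using gg_tendsto.neg

lemma hasDerivAt_neg_gg (x : ℝ) : HasDerivAt (fun y => -gg y) (x * gg x) x := by
  have h : HasDerivAt (fun y : ℝ => -y^2/2) (-x) x := by
    have := ((hasDerivAt_pow 2 x).neg).div_const 2
    simpa using this.congr_deriv (by ring)
  have h3 : HasDerivAt (fun y => -gg y) (-(gg x * -x)) x := by
    exact h.exp.neg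
  exact h3.congr_deriv (by ring)

lemma integral_x_gg {u : ℝ} (hu : 0 < u) : ∫ x in Ioi u, x * gg x = gg u := by
  have := integral_Ioi_of_hasDerivAt_of_nonneg' (g := fun y => -gg y)
    (g' := fun x => x * gg x) (l := 0) (a := u)
    (fun x _ => hasDerivAt_neg_gg x)
    (fun x hx => mul_nonneg (le_of_lt (hu.trans hx)) (gg_pos x).le)
    neg_gg_tendsto
  simpa using this

lemma integrableOn_x_gg {u : ℝ} (hu : 0 < u) : IntegrableOn (fun x => x * gg x) (Ioi u) :=
  integrableOn_Ioi_deriv_of_nonneg' (g := fun y => -gg y)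
    (fun x _ => hasDerivAt_neg_gg x)
    (fun x hx => mul_nonneg (le_of_lt (hu.trans hx)) (gg_pos x).le)
    neg_gg_tendsto

lemma hasDerivAt_F {x : ℝ} (hx : 0 < x) :
    HasDerivAt (fun y => -(gg y / y)) ((1 + (x^2)⁻¹) * gg x) x := by
  have hg : HasDerivAt gg (-(x * gg x)) x := by simpa [Pi.neg_def] using (hasDerivAt_neg_gg x).neg
  have h := (hg.div (hasDerivAt_id x) (ne_of_gt hx)).neg
  exact h.congr_deriv (by simp only [id]; field_simp; ring)

lemma F_tendsto : Tendsto (fun x => -(gg x / x)) atTop (nhds 0) := by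
  simpa [div_eq_mul_inv] using (gg_tendsto.mul tendsto_inv_atTop_zero).neg

lemma integral_F {u : ℝ} (hu : 0 < u) :
    ∫ x in Ioi u, (1 + (x^2)⁻¹) * gg x = gg u / u := by
  have := integral_Ioi_of_hasDerivAt_of_nonneg' (g := fun y => -(gg y / y))
    (g' := fun x => (1 + (x^2)⁻¹) * gg x) (l := 0) (a := u)
    (fun x hx => hasDerivAt_F (hu.trans_le hx))
    (fun x _ => mul_nonneg (by positivity) (gg_pos x).le)
    F_tendsto
  simpa using this

lemma integrableOn_F {u : ℝ} (hu : 0 < u) :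
    IntegrableOn (fun x => (1 + (x^2)⁻¹) * gg x) (Ioi u) :=
  integrableOn_Ioi_deriv_of_nonneg' (g := fun y => -(gg y / y))
    (fun x hx => hasDerivAt_F (hu.trans_le hx))
    (fun x _ => mul_nonneg (by positivity) (gg_pos x).le)
    F_tendsto

lemma integrable_gg : Integrable gg := by
  have : gg = fun x => rexp (-(1/2) * x^2) := by funext x; simp [gg]; ring_nf
  rw [this]; exact integrable_exp_neg_mul_sq (by norm_num)

noncomputable def T (u : ℝ) : ℝ := ∫ x in Ioi u, gg x

lemma T_upper {u : ℝ} (hu : 0 < u) : T u ≤ gg u / u := by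
  have h1 : T u ≤ ∫ x in Ioi u, u⁻¹ * (x * gg x) := by
    apply setIntegral_mono_on integrable_gg.integrableOn
      (((integrableOn_x_gg hu).const_mul u⁻¹)) measurableSet_Ioi
    intro x hx
    have hxu : u ≤ x := (le_of_lt hx)
    rw [← mul_assoc]
    nth_rewrite 1 [← one_mul (gg x)]
    apply mul_le_mul_of_nonneg_right _ (gg_pos x).le
    rw [inv_mul_eq_div, le_div_iff₀ hu]; linarith
  rw [integral_const_mul, integral_x_gg hu] at h1
  simpa [inv_mul_eq_div] using h1

lemma T_lower {u : ℝ} (hu : 0 < u) : u * gg u / (u^2 + 1) ≤ T u := by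
  have h1 : gg u / u ≤ (1 + (u^2)⁻¹) * T u := by
    rw [← integral_F hu]
    rw [show (1 + (u^2)⁻¹) * T u = ∫ x in Ioi u, (1 + (u^2)⁻¹) * gg x by
      rw [T, integral_const_mul]]
    apply setIntegral_mono_on (integrableOn_F hu)
      (integrable_gg.integrableOn.const_mul _) measurableSet_Ioi
    intro x hx
    apply mul_le_mul_of_nonneg_right _ (gg_pos x).le
    have : u^2 ≤ x^2 := by nlinarith [le_of_lt (show u < x from hx)]
    gcongr
  rw [div_le_iff₀ (by positivity : (0:ℝ) < u^2 + 1)]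
  have h2 := mul_le_mul_of_nonneg_right h1 (sq_nonneg u)
  have e1 : gg u / u * u^2 = u * gg u := by field_simp
  have e2 : (1 + (u^2)⁻¹) * T u * u^2 = T u * (u^2+1) := by field_simp
  rw [e1, e2] at h2; exact h2

lemma key_exp {s u₁ u₂ : ℝ} (hs1 : s ≤ u₁^2) (h1 : 1 ≤ u₁) (h12 : u₁ ≤ u₂) (hs : 0 < s) :
    gg u₂ ≤ (u₁/u₂)^s * gg u₁ := by
  have hu1 : (0:ℝ) < u₁ := lt_of_lt_of_le one_pos h1
  have hu2 : (0:ℝ) < u₂ := hu1.trans_le h12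
  rw [Real.rpow_def_of_pos (div_pos hu1 hu2)]
  unfold gg
  rw [← Real.exp_add]
  apply Real.exp_le_exp.mpr
  have hlog : Real.log (u₁/u₂) = -(Real.log u₂ - Real.log u₁) := by
    rw [Real.log_div (ne_of_gt hu1) (ne_of_gt hu2)]; ring
  rw [hlog]
  have hL0 : 0 ≤ Real.log u₂ - Real.log u₁ := by
    have := Real.log_le_log hu1 h12
    linarith
  have hlub : Real.log u₂ - Real.log u₁ ≤ (u₂ - u₁)/u₁ := by
    have h := Real.log_le_sub_one_of_pos (div_pos hu2 hu1)
    rw [Real.log_div (ne_of_gt hu2) (ne_of_gt hu1)] at h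
    rw [div_sub_one (ne_of_gt hu1)] at h
    linarith
  set L := Real.log u₂ - Real.log u₁ with hLdef
  -- goal: -u₂^2/2 ≤ s * -L + -u₁^2/2, i.e. s*L ≤ (u₂^2-u₁^2)/2
  have h2 : u₁ * L ≤ u₂ - u₁ := by
    have := mul_le_mul_of_nonneg_left hlub hu1.le
    rwa [mul_div_cancel₀ _ (ne_of_gt hu1)] at this
  have h3 : s * L ≤ u₁^2 * L := mul_le_mul_of_nonneg_right hs1 hL0
  nlinarith [mul_le_mul_of_nonneg_left h2 hu1.le, sq_nonneg (u₂ - u₁)]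

theorem stmt9 (s : ℝ) (hs : 0 < s) :
    ∃ u₀ : ℝ, 0 < u₀ ∧ ∀ u₁ u₂ : ℝ, u₀ ≤ u₁ → u₁ ≤ u₂ →
      ((gaussianReal 0 1) (Set.Ioi u₂)).toReal / ((gaussianReal 0 1) (Set.Ioi u₁)).toReal
        ≤ 2 * (u₁ / u₂) ^ s := by
  refine ⟨max 1 (Real.sqrt s), lt_of_lt_of_le one_pos (le_max_left _ _), ?_⟩
  intro u₁ u₂ h1 h12
  have hu11 : (1:ℝ) ≤ u₁ := le_trans (le_max_left _ _) h1
  have hu1 : (0:ℝ) < u₁ := lt_of_lt_of_le one_pos hu11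
  have hu2 : (0:ℝ) < u₂ := hu1.trans_le h12
  have hs1 : s ≤ u₁^2 := by
    have hsq : Real.sqrt s ≤ u₁ := le_trans (le_max_right _ _) h1
    nlinarith [Real.sq_sqrt hs.le, Real.sqrt_nonneg s]
  -- rewrite measures
  have hmeas : ∀ u : ℝ, ((gaussianReal 0 1) (Set.Ioi u)).toReal = (Real.sqrt (2*π))⁻¹ * T u := by
    intro u
    rw [gaussianReal_apply_eq_integral 0 one_ne_zero (Set.Ioi u),
      ENNReal.toReal_ofReal (integral_nonneg fun x => gaussianPDFReal_nonneg 0 1 x)]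
    have hpdf : ∀ x, gaussianPDFReal 0 1 x = (Real.sqrt (2*π))⁻¹ * gg x := by
      intro x
      simp only [gaussianPDFReal, gg, NNReal.coe_one, mul_one, sub_zero]
    simp_rw [hpdf]
    rw [integral_const_mul]
    rfl
  have hc : (0:ℝ) < (Real.sqrt (2*π))⁻¹ := by
    have := Real.pi_pos; positivity
  rw [hmeas u₁, hmeas u₂, mul_div_mul_left _ _ (ne_of_gt hc)]
  have hT1l := T_lower hu1
  have hT1pos : 0 < T u₁ := lt_of_lt_of_le (by have := gg_pos u₁; positivity) hT1l
  rw [div_le_iff₀ hT1pos]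
  have hrnn : (0:ℝ) ≤ (u₁/u₂)^s := Real.rpow_nonneg (by positivity) s
  have hmid : gg u₁ / u₂ ≤ 2 * (u₁ * gg u₁ / (u₁^2+1)) := by
    have h' : gg u₁ / u₂ ≤ (2*(u₁*gg u₁)) / (u₁^2+1) := by
      rw [div_le_div_iff₀ hu2 (by positivity)]
      nlinarith [gg_pos u₁, sq_nonneg (u₁ - 1), mul_le_mul_of_nonneg_left h12 hu1.le]
    calc gg u₁ / u₂ ≤ (2*(u₁*gg u₁)) / (u₁^2+1) := h'
      _ = 2 * (u₁ * gg u₁ / (u₁^2+1)) := by ring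
  calc T u₂ ≤ gg u₂ / u₂ := T_upper hu2
    _ ≤ ((u₁/u₂)^s * gg u₁) / u₂ := by
        gcongr
        exact key_exp hs1 hu11 h12 hs
    _ = (u₁/u₂)^s * (gg u₁ / u₂) := by ring
    _ ≤ (u₁/u₂)^s * (2 * (u₁ * gg u₁ / (u₁^2+1))) := mul_le_mul_of_nonneg_left hmid hrnn
    _ ≤ (u₁/u₂)^s * (2 * T u₁) := by
        apply mul_le_mul_of_nonneg_left _ hrnn
        linarith
    _ = 2 * (u₁/u₂)^s * T u₁ := by ring
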